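/- arXiv:2010.02637 — 4 statements merged into one kernel-verified Lean document; each statement's English description precedes it below -/
import Mathlib

section
/- Let X be a random variable with values in ℝ^d on a probability space, let ξ : ℝ^d → ℝ^m be measurable, and let E : ℝ^d → ℝ^k (k ≥ m) be a measurable encoder that is disentangled with respect to ξ, i.e. for each i = 1,…,m there is an injective function g_i : ℝ → ℝ with E_i(x) = g_i(ξ_i(x)) for all x, and moreover there are measurable functions r_i : ℝ → ℝ with r_i ∘ g_i = id. If there exist indices i ≠ j (with i, j ≤ m) such that the random variables ξ_i(X) and ξ_j(X) are not independent, then the law of E(X) on ℝ^k is not equal to any product probability measure ⊗_{i=1}^k p_i (with each p_i a probability measure on ℝ). -/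
open MeasureTheory ProbabilityTheory

lemma pi_single_preimage {k : ℕ} (p : Fin k → Measure ℝ) [∀ i, IsProbabilityMeasure (p i)]
    (i : Fin k) {A : Set ℝ} (hA : MeasurableSet A) :
    Measure.pi p ((fun y => y i) ⁻¹' A) = p i A := by
  have hset : (fun y : Fin k → ℝ => y i) ⁻¹' A =
      Set.univ.pi (Function.update (fun _ => (Set.univ : Set ℝ)) i A) := by
    ext y
    simp only [Set.mem_preimage, Set.mem_pi, Set.mem_univ, true_implies]
    constructor
    · intro h jj
      rcases eq_or_ne jj i with rfl | hj
      · simpa using h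
      · simp [Function.update_of_ne hj]
    · intro h
      have := h i
      rwa [Function.update_self] at this
  rw [hset, Measure.pi_pi]
  rw [Fintype.prod_eq_single i (fun l hl => by simp [Function.update_of_ne hl, measure_univ])]
  simp

lemma pi_double_preimage {k : ℕ} (p : Fin k → Measure ℝ) [∀ i, IsProbabilityMeasure (p i)]
    {i j : Fin k} (hij : i ≠ j) {A B : Set ℝ} (hA : MeasurableSet A) (hB : MeasurableSet B) :
    Measure.pi p ((fun y => y i) ⁻¹' A ∩ (fun y => y j) ⁻¹' B) = p i A * p j B := by
  have hset : ((fun y : Fin k → ℝ => y i) ⁻¹' A ∩ (fun y => y j) ⁻¹' B) =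
      Set.univ.pi (Function.update (Function.update (fun _ => (Set.univ : Set ℝ)) i A) j B) := by
    ext y
    simp only [Set.mem_inter_iff, Set.mem_preimage, Set.mem_pi, Set.mem_univ, true_implies]
    constructor
    · rintro ⟨h1, h2⟩ jj
      rcases eq_or_ne jj j with rfl | hj
      · simpa using h2
      · rw [Function.update_of_ne hj]
        rcases eq_or_ne jj i with rfl | hi
        · simpa using h1
        · simp [Function.update_of_ne hi]
    · intro h
      constructor
      · have := h i
        rwa [Function.update_of_ne hij, Function.update_self] at this
      · have := h j
        rwa [Function.update_self] at this
  rw [hset, Measure.pi_pi]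
  rw [Fintype.prod_eq_mul i j hij
    (fun l hl => by
      simp [Function.update_of_ne hl.2, Function.update_of_ne hl.1, measure_univ])]
  simp [Function.update_of_ne hij]

/-- If a measurable encoder `E : ℝ^d → ℝ^k` is disentangled with respect to
measurable factors `ξ : ℝ^d → ℝ^m` (i.e. `E_i = g_i ∘ ξ_i` with `g_i` injective, admitting
measurable left inverses `r_i`), and two of the factors `ξ_i(X), ξ_j(X)` are not independent,
then the law of `E(X)` is not a product probability measure. -/
theorem disentangled_law_ne_product
    {Ω : Type*} [MeasurableSpace Ω] (μ : Measure Ω) [IsProbabilityMeasure μ]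
    {d m k : ℕ} (hmk : m ≤ k)
    (X : Ω → (Fin d → ℝ)) (hX : Measurable X)
    (ξ : (Fin d → ℝ) → (Fin m → ℝ)) (hξ : Measurable ξ)
    (E : (Fin d → ℝ) → (Fin k → ℝ)) (hE : Measurable E)
    (g r : Fin m → ℝ → ℝ)
    (hg : ∀ i, Function.Injective (g i))
    (hr : ∀ i, Measurable (r i))
    (hrg : ∀ i t, r i (g i t) = t)
    (hEg : ∀ i x, E x (Fin.castLE hmk i) = g i (ξ x i))
    (hdep : ∃ i j : Fin m, i ≠ j ∧
      ¬ IndepFun (fun ω => ξ (X ω) i) (fun ω => ξ (X ω) j) μ)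
    (p : Fin k → Measure ℝ) (hp : ∀ i, IsProbabilityMeasure (p i)) :
    Measure.map (fun ω => E (X ω)) μ ≠ Measure.pi p := by
  haveI : ∀ i, IsProbabilityMeasure (p i) := hp
  intro h
  obtain ⟨i, j, hij, hdep'⟩ := hdep
  apply hdep'
  set i' := Fin.castLE hmk i with hi'def
  set j' := Fin.castLE hmk j with hj'def
  have hi'j' : i' ≠ j' := by
    intro hEq
    exact hij (Fin.ext (by simpa [hi'def, hj'def] using congrArg Fin.val hEq))
  have hξE : ∀ (l : Fin m) ω, ξ (X ω) l = r l (E (X ω) (Fin.castLE hmk l)) := by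
    intro l ω; rw [hEg, hrg]
  have hEXmeas : Measurable fun ω => E (X ω) := hE.comp hX
  rw [indepFun_iff_measure_inter_preimage_eq_mul]
  intro s t hs ht
  have hAi : MeasurableSet ((r i) ⁻¹' s) := (hr i) hs
  have hAj : MeasurableSet ((r j) ⁻¹' t) := (hr j) ht
  have hseti : (fun ω => ξ (X ω) i) ⁻¹' s =
      (fun ω => E (X ω)) ⁻¹' ((fun y => y i') ⁻¹' ((r i) ⁻¹' s)) := by
    ext ω; simp [hξE i ω, hi'def]
  have hsetj : (fun ω => ξ (X ω) j) ⁻¹' t =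
      (fun ω => E (X ω)) ⁻¹' ((fun y => y j') ⁻¹' ((r j) ⁻¹' t)) := by
    ext ω; simp [hξE j ω, hj'def]
  have hmi : MeasurableSet ((fun y : Fin k → ℝ => y i') ⁻¹' ((r i) ⁻¹' s)) :=
    (measurable_pi_apply i') hAi
  have hmj : MeasurableSet ((fun y : Fin k → ℝ => y j') ⁻¹' ((r j) ⁻¹' t)) :=
    (measurable_pi_apply j') hAj
  rw [hseti, hsetj, ← Set.preimage_inter,
    ← Measure.map_apply hEXmeas (hmi.inter hmj),
    ← Measure.map_apply hEXmeas hmi, ← Measure.map_apply hEXmeas hmj, h]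
  rw [pi_double_preimage p hi'j' hAi hAj, pi_single_preimage p i' hAi,
    pi_single_preimage p j' hAj]
end

section
/- Let X be a random variable with values in ℝ^d, let ξ : ℝ^d → ℝ^m be measurable, and let E : ℝ^d → ℝ^k (k ≥ m) be a measurable encoder disentangled w.r.t. ξ, i.e. E_i(x) = g_i(ξ_i(x)) for injective g_i admitting measurable left inverses r_i with r_i ∘ g_i = id (i = 1,…,m). Suppose there exist i ≠ j (i, j ≤ m) such that ξ_i(X) and ξ_j(X) are not independent. Then for every product probability measure p_z = ⊗_{i=1}^k p_i on ℝ^k and every Markov kernel G from ℝ^k to ℝ^d, the Kullback–Leibler divergence between the law of (X, E(X)) on ℝ^d × ℝ^k and the joint measure p_G on ℝ^d × ℝ^k determined by z ∼ p_z, x ∼ G(·|z) is strictly positive: KL(law(X, E(X)), p_G) > 0. -/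
open MeasureTheory ProbabilityTheory
open scoped Classical

/-- Kullback–Leibler divergence `KL(μ, ν) = ∫ log(dμ/dν) dμ`, equal to `+∞` when `μ` is not
absolutely continuous with respect to `ν` (or when the log-likelihood ratio is not integrable). -/
noncomputable def klDiv {α : Type*} [MeasurableSpace α] (μ ν : Measure α) : ENNReal :=
  if μ ≪ ν ∧ Integrable (llr μ ν) μ then ENNReal.ofReal (∫ x, llr μ ν x ∂μ) else ⊤

section Aux

open Real
open scoped ENNReal

/-- Gibbs' inequality, equality case: if `KL(μ,ν) ≤ 0` (with `μ ≪ ν` and integrable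
log-likelihood ratio), then `μ = ν`. -/
lemma gibbs_eq_aux {α : Type*} [MeasurableSpace α] {μ ν : Measure α}
    [IsProbabilityMeasure μ] [IsProbabilityMeasure ν]
    (hμν : μ ≪ ν) (hint : Integrable (llr μ ν) μ)
    (hle : ∫ x, llr μ ν x ∂μ ≤ 0) : μ = ν := by
  set f := μ.rnDeriv ν with hf
  have mf : Measurable f := Measure.measurable_rnDeriv μ ν
  have hpos : ∀ᵐ x ∂μ, 0 < f x := Measure.rnDeriv_pos hμν
  have hlt : ∀ᵐ x ∂μ, f x < ⊤ := hμν.ae_le (Measure.rnDeriv_lt_top μ ν)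
  set ψ : α → ℝ := fun x => ((f x).toReal)⁻¹ with hψ
  have hψ0 : ∀ x, 0 ≤ ψ x := fun x => inv_nonneg.2 ENNReal.toReal_nonneg
  have hψmeas : Measurable ψ := mf.ennreal_toReal.inv
  have key : ∀ x, f x * ENNReal.ofReal (ψ x) ≤ 1 := by
    intro x
    rcases eq_or_ne (f x) 0 with h0 | h0
    · simp [h0]
    rcases eq_or_ne (f x) ⊤ with h2 | h2
    · simp [hψ, h2]
    · have ht : 0 < (f x).toReal := ENNReal.toReal_pos h0 h2
      have : ENNReal.ofReal (ψ x) = (f x)⁻¹ := by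
        rw [hψ, ENNReal.ofReal_inv_of_pos ht, ENNReal.ofReal_toReal h2]
      rw [this, ENNReal.mul_inv_cancel h0 h2]
  have hlint : ∫⁻ x, ENNReal.ofReal (ψ x) ∂μ ≤ 1 := by
    conv_lhs => rw [← Measure.withDensity_rnDeriv_eq μ ν hμν]
    rw [lintegral_withDensity_eq_lintegral_mul _ mf hψmeas.ennreal_ofReal]
    calc ∫⁻ x, (f * fun x => ENNReal.ofReal (ψ x)) x ∂ν ≤ ∫⁻ _, 1 ∂ν :=
          lintegral_mono key
      _ = 1 := by simp
  have hψint : Integrable ψ μ := by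
    refine ⟨hψmeas.aestronglyMeasurable, ?_⟩
    rw [hasFiniteIntegral_iff_norm]
    calc ∫⁻ x, ENNReal.ofReal ‖ψ x‖ ∂μ = ∫⁻ x, ENNReal.ofReal (ψ x) ∂μ := by
          congr 1; ext x; rw [Real.norm_of_nonneg (hψ0 x)]
      _ ≤ 1 := hlint
      _ < ⊤ := ENNReal.one_lt_top
  have hψle : ∫ x, ψ x ∂μ ≤ 1 := by
    rw [integral_eq_lintegral_of_nonneg_ae (Filter.Eventually.of_forall hψ0)
      hψmeas.aestronglyMeasurable]
    calc (∫⁻ x, ENNReal.ofReal (ψ x) ∂μ).toReal ≤ (1 : ℝ≥0∞).toReal :=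
          ENNReal.toReal_mono ENNReal.one_ne_top hlint
      _ = 1 := by simp
  have h0 : 0 ≤ᵐ[μ] fun x => ψ x - 1 + llr μ ν x := by
    filter_upwards [hpos, hlt] with x h1 h2
    have ht : 0 < (f x).toReal := ENNReal.toReal_pos h1.ne' h2.ne
    have hlog : Real.log ((f x).toReal)⁻¹ ≤ ((f x).toReal)⁻¹ - 1 :=
      Real.log_le_sub_one_of_pos (inv_pos.2 ht)
    have : llr μ ν x = Real.log (f x).toReal := rfl
    rw [Real.log_inv] at hlog
    simp only [Pi.zero_apply, this, hψ]
    linarith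
  have hI : Integrable (fun x => ψ x - 1 + llr μ ν x) μ :=
    (hψint.sub (integrable_const 1)).add hint
  have hint0 : ∫ x, (ψ x - 1 + llr μ ν x) ∂μ = 0 := by
    have hle' : ∫ x, (ψ x - 1 + llr μ ν x) ∂μ ≤ 0 := by
      have e1 : ∫ x, (ψ x - 1 + llr μ ν x) ∂μ
          = (∫ x, (ψ x - 1) ∂μ) + ∫ x, llr μ ν x ∂μ :=
        integral_add (hψint.sub (integrable_const 1)) hint
      have e2 : ∫ x, (ψ x - 1) ∂μ = (∫ x, ψ x ∂μ) - ∫ _, (1 : ℝ) ∂μ :=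
        integral_sub hψint (integrable_const 1)
      have e3 : ∫ _, (1 : ℝ) ∂μ = 1 := by simp
      rw [e1, e2, e3]
      linarith
    exact le_antisymm hle' (integral_nonneg_of_ae h0)
  have hae := (integral_eq_zero_iff_of_nonneg_ae h0 hI).mp hint0
  have hone : ∀ᵐ x ∂μ, f x = 1 := by
    filter_upwards [hpos, hlt, hae] with x h1 h2 h3
    have ht : 0 < (f x).toReal := ENNReal.toReal_pos h1.ne' h2.ne
    by_contra hne
    have htne : (f x).toReal ≠ 1 := fun h => hne ((ENNReal.toReal_eq_one_iff _).mp h)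
    have hstrict : Real.log ((f x).toReal)⁻¹ < ((f x).toReal)⁻¹ - 1 :=
      Real.log_lt_sub_one_of_pos (inv_pos.2 ht) (by simpa [inv_eq_one] using htne)
    rw [Real.log_inv] at hstrict
    have h3' : ψ x - 1 + llr μ ν x = 0 := by simpa using h3
    have hllr : llr μ ν x = Real.log (f x).toReal := rfl
    rw [hllr] at h3'
    simp only [hψ] at h3'
    linarith
  set A : Set α := {x | f x = 1} with hA
  have hAmeas : MeasurableSet A := mf (measurableSet_singleton 1)
  have hμAc : μ Aᶜ = 0 := by
    have h := ae_iff.mp hone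
    simpa [hA, Set.compl_setOf] using h
  have hμA : μ A = 1 := (prob_compl_eq_zero_iff hAmeas).mp hμAc
  have hνA : ν A = 1 := by
    have h1 : μ A = ∫⁻ x in A, f x ∂ν := (Measure.setLIntegral_rnDeriv hμν A).symm
    have h2 : ∫⁻ x in A, f x ∂ν = ∫⁻ _ in A, 1 ∂ν :=
      setLIntegral_congr_fun hAmeas (fun x hx => hx)
    rw [h1, h2] at hμA
    simpa using hμA
  have hνAc : ν Aᶜ = 0 := (prob_compl_eq_zero_iff hAmeas).mpr hνA
  have hfone : f =ᵐ[ν] 1 := by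
    refine ae_iff.mpr ?_
    simpa [hA, Set.compl_setOf] using hνAc
  calc μ = ν.withDensity f := (Measure.withDensity_rnDeriv_eq μ ν hμν).symm
    _ = ν.withDensity 1 := withDensity_congr_ae hfone
    _ = ν := by simp

/-- Measure of a one-coordinate cylinder under a product probability measure. -/
lemma pi_cyl_one {k : ℕ} (p : Fin k → Measure ℝ) [∀ i, IsProbabilityMeasure (p i)]
    (i : Fin k) (A : Set ℝ) :
    Measure.pi p ((fun y : Fin k → ℝ => y i) ⁻¹' A) = p i A := by
  set S : Fin k → Set ℝ := fun l => if l = i then A else Set.univ with hS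
  have hset : (fun y : Fin k → ℝ => y i) ⁻¹' A = Set.pi Set.univ S := by
    ext y
    simp only [Set.mem_preimage, Set.mem_pi, Set.mem_univ, true_implies, hS]
    constructor
    · intro h l
      split_ifs with hl
      · subst hl; exact h
      · trivial
    · intro h
      have := h i
      simpa using this
  rw [hset, Measure.pi_pi]
  rw [← Finset.prod_subset (Finset.subset_univ ({i} : Finset (Fin k)))
    (fun l _ hl => by
      have hl' : l ≠ i := by simpa using hl
      simp [hS, hl'])]
  simp [hS]

/-- Measure of a two-coordinate cylinder under a product probability measure. -/
lemma pi_cyl_two {k : ℕ} (p : Fin k → Measure ℝ) [∀ i, IsProbabilityMeasure (p i)]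
    {i j : Fin k} (hij : i ≠ j) (A B : Set ℝ) :
    Measure.pi p ((fun y : Fin k → ℝ => y i) ⁻¹' A ∩ (fun y : Fin k → ℝ => y j) ⁻¹' B)
      = p i A * p j B := by
  set S : Fin k → Set ℝ := fun l => if l = i then A else if l = j then B else Set.univ with hS
  have hset : (fun y : Fin k → ℝ => y i) ⁻¹' A ∩ (fun y : Fin k → ℝ => y j) ⁻¹' B
      = Set.pi Set.univ S := by
    ext y
    simp only [Set.mem_inter_iff, Set.mem_preimage, Set.mem_pi, Set.mem_univ, true_implies, hS]
    constructor
    · rintro ⟨h1, h2⟩ l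
      split_ifs with h h'
      · subst h; exact h1
      · subst h'; exact h2
      · trivial
    · intro h
      constructor
      · have := h i; simpa using this
      · have := h j; simpa [Ne.symm hij] using this
  rw [hset, Measure.pi_pi]
  rw [← Finset.prod_subset (Finset.subset_univ ({i, j} : Finset (Fin k)))
    (fun l _ hl => by
      simp only [Finset.mem_insert, Finset.mem_singleton, not_or] at hl
      simp [hS, hl.1, hl.2])]
  rw [Finset.prod_pair hij]
  simp [hS, Ne.symm hij]

end Aux

/-- If a measurable encoder `E` is disentangled w.r.t. factors `ξ` and two of the
factors `ξ_i(X), ξ_j(X)` are not independent, then for every product prior `p_z = ⊗ p_i` on `ℝ^k`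
and every Markov kernel `G` from `ℝ^k` to `ℝ^d`, the KL divergence between the law of `(X, E(X))`
and the joint measure of `(x, z)` with `z ∼ p_z`, `x ∼ G(·|z)` is strictly positive. -/
theorem klDiv_pos_of_disentangled_dependent
    {Ω : Type*} [MeasurableSpace Ω] (μ : Measure Ω) [IsProbabilityMeasure μ]
    {d m k : ℕ} (hmk : m ≤ k)
    (X : Ω → (Fin d → ℝ)) (hX : Measurable X)
    (ξ : (Fin d → ℝ) → (Fin m → ℝ)) (hξ : Measurable ξ)
    (E : (Fin d → ℝ) → (Fin k → ℝ)) (hE : Measurable E)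
    (g r : Fin m → ℝ → ℝ)
    (hg : ∀ i, Function.Injective (g i))
    (hr : ∀ i, Measurable (r i))
    (hrg : ∀ i t, r i (g i t) = t)
    (hEg : ∀ i x, E x (Fin.castLE hmk i) = g i (ξ x i))
    (hdep : ∃ i j : Fin m, i ≠ j ∧
      ¬ IndepFun (fun ω => ξ (X ω) i) (fun ω => ξ (X ω) j) μ)
    (p : Fin k → Measure ℝ) (hp : ∀ i, IsProbabilityMeasure (p i))
    (G : Kernel (Fin k → ℝ) (Fin d → ℝ)) [IsMarkovKernel G] :
    0 < klDiv (Measure.map (fun ω => (X ω, E (X ω))) μ)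
        (Measure.map Prod.swap (Measure.compProd (Measure.pi p) G)) := by
  haveI : ∀ i, IsProbabilityMeasure (p i) := hp
  have hEX : Measurable fun ω => E (X ω) := hE.comp hX
  have hXE : Measurable fun ω => (X ω, E (X ω)) := hX.prodMk hEX
  haveI : IsProbabilityMeasure (Measure.map (fun ω => (X ω, E (X ω))) μ) :=
    Measure.isProbabilityMeasure_map hXE.aemeasurable
  haveI : IsProbabilityMeasure (Measure.map Prod.swap (Measure.compProd (Measure.pi p) G)) :=
    Measure.isProbabilityMeasure_map measurable_swap.aemeasurable
  rw [klDiv]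
  split_ifs with h
  · rw [ENNReal.ofReal_pos]
    by_contra hcon
    push_neg at hcon
    have heq := gibbs_eq_aux h.1 h.2 hcon
    have hsnd : Measure.map (fun ω => E (X ω)) μ = Measure.pi p := by
      have h2 := congrArg (fun ρ => Measure.map (Prod.snd : (Fin d → ℝ) × (Fin k → ℝ) → _) ρ) heq
      rw [Measure.map_map measurable_snd hXE,
        Measure.map_map measurable_snd measurable_swap] at h2
      have h3 : ((Prod.snd : (Fin d → ℝ) × (Fin k → ℝ) → _) ∘ fun ω => (X ω, E (X ω)))
          = fun ω => E (X ω) := rfl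
      have h4 : ((Prod.snd : (Fin d → ℝ) × (Fin k → ℝ) → _) ∘ Prod.swap)
          = (Prod.fst : (Fin k → ℝ) × (Fin d → ℝ) → _) := rfl
      rw [h3, h4] at h2
      rw [h2]
      exact Measure.fst_compProd (Measure.pi p) G
    obtain ⟨i, j, hij, hdep⟩ := hdep
    apply hdep
    have hij' : Fin.castLE hmk i ≠ Fin.castLE hmk j :=
      fun hh => hij (Fin.castLE_injective hmk hh)
    have hfi : (fun ω => ξ (X ω) i) = fun ω => r i (E (X ω) (Fin.castLE hmk i)) := by
      funext ω; rw [hEg i (X ω), hrg]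
    have hfj : (fun ω => ξ (X ω) j) = fun ω => r j (E (X ω) (Fin.castLE hmk j)) := by
      funext ω; rw [hEg j (X ω), hrg]
    rw [hfi, hfj, indepFun_iff_measure_inter_preimage_eq_mul]
    intro s t hs ht
    have hms : MeasurableSet ((r i) ⁻¹' s) := hr i hs
    have hmt : MeasurableSet ((r j) ⁻¹' t) := hr j ht
    have e1 : (fun ω => r i (E (X ω) (Fin.castLE hmk i))) ⁻¹' s
        = (fun ω => E (X ω)) ⁻¹' ((fun y : Fin k → ℝ => y (Fin.castLE hmk i)) ⁻¹' ((r i) ⁻¹' s)) :=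
      rfl
    have e2 : (fun ω => r j (E (X ω) (Fin.castLE hmk j))) ⁻¹' t
        = (fun ω => E (X ω)) ⁻¹' ((fun y : Fin k → ℝ => y (Fin.castLE hmk j)) ⁻¹' ((r j) ⁻¹' t)) :=
      rfl
    have m1 : MeasurableSet ((fun y : Fin k → ℝ => y (Fin.castLE hmk i)) ⁻¹' ((r i) ⁻¹' s)) :=
      (measurable_pi_apply _) hms
    have m2 : MeasurableSet ((fun y : Fin k → ℝ => y (Fin.castLE hmk j)) ⁻¹' ((r j) ⁻¹' t)) :=
      (measurable_pi_apply _) hmt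
    rw [e1, e2, ← Set.preimage_inter, ← Measure.map_apply hEX (m1.inter m2),
      ← Measure.map_apply hEX m1, ← Measure.map_apply hEX m2, hsnd,
      pi_cyl_two p hij', pi_cyl_one p _, pi_cyl_one p _]
  · simp
end

section
/- Let X be a random variable with values in ℝ^d and Y a random vector with values in [0,1]^m on the same probability space, and λ > 0. For each i = 1,…,m let ξ_i : ℝ^d → (0,1) be measurable with ξ_i(X) = 𝔼[Y_i | X] almost surely. Define E* : ℝ^d → ℝ^k (k ≥ m) by E*_i(x) = logit(ξ_i(x)) for i ≤ m and E*_i(x) = 0 for i > m, and let ν* be the law of (X, E*(X)) on ℝ^d × ℝ^k. Then for every measurable E : ℝ^d → ℝ^k with each CE(E_i(X), Y_i) integrable and every probability measure ν on ℝ^d × ℝ^k: KL(law(X, E(X)), ν) + λ·Σ_{i=1}^m 𝔼[CE(E_i(X), Y_i)] ≥ KL(law(X, E*(X)), ν*) + λ·Σ_{i=1}^m 𝔼[CE(E*_i(X), Y_i)], and the right-hand side equals λ·Σ_{i=1}^m 𝔼[CE(logit(ξ_i(X)), Y_i)]. In particular (E*, ν*) is a global minimizer of the objective, and E* is disentangled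 w.r.t. ξ with g_i = σ^{−1}. -/
open MeasureTheory ProbabilityTheory
open scoped Classical

/-- The sigmoid function `σ(t) = 1/(1+exp(−t))`. -/
noncomputable def sigmoid (t : ℝ) : ℝ := 1 / (1 + Real.exp (-t))

/-- The cross-entropy loss `CE(t,y) = −(y·log σ(t) + (1−y)·log(1−σ(t)))`. -/
noncomputable def CE (t y : ℝ) : ℝ :=
  -(y * Real.log (sigmoid t) + (1 - y) * Real.log (1 - sigmoid t))

/-- The logit function `logit(p) = log(p/(1−p))`, the inverse `σ⁻¹` of the sigmoid on `(0,1)`. -/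
noncomputable def logit (p : ℝ) : ℝ := Real.log (p / (1 - p))

lemma sigmoid_mem_Ioo (t : ℝ) : sigmoid t ∈ Set.Ioo (0:ℝ) 1 := by
  have h := Real.exp_pos (-t)
  constructor
  · exact div_pos one_pos (by linarith)
  · rw [sigmoid, div_lt_one (by linarith)]; linarith

lemma sigmoid_logit {p : ℝ} (hp : p ∈ Set.Ioo (0:ℝ) 1) : sigmoid (logit p) = p := by
  obtain ⟨h0, h1⟩ := hp
  have h1p : 0 < 1 - p := by linarith
  have hpos : 0 < p / (1 - p) := div_pos h0 h1p
  rw [sigmoid, logit, Real.exp_neg, Real.exp_log hpos]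
  field_simp
  ring

lemma CE_nonneg (t : ℝ) {y : ℝ} (hy : y ∈ Set.Icc (0:ℝ) 1) : 0 ≤ CE t y := by
  obtain ⟨hs0, hs1⟩ := sigmoid_mem_Ioo t
  have l1 : Real.log (sigmoid t) ≤ 0 := Real.log_nonpos hs0.le hs1.le
  have l2 : Real.log (1 - sigmoid t) ≤ 0 := Real.log_nonpos (by linarith) (by linarith)
  have := mul_nonneg hy.1 (neg_nonneg.2 l1)
  have := mul_nonneg (by linarith [hy.2] : (0:ℝ) ≤ 1 - y) (neg_nonneg.2 l2)
  unfold CE; nlinarith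

lemma gibbs {p : ℝ} (hp : p ∈ Set.Ioo (0:ℝ) 1) (t : ℝ) : CE (logit p) p ≤ CE t p := by
  obtain ⟨h0, h1⟩ := hp
  obtain ⟨hs0, hs1⟩ := sigmoid_mem_Ioo t
  set q := sigmoid t with hq
  rw [CE, CE, sigmoid_logit ⟨h0, h1⟩]
  have e1 : Real.log (q / p) ≤ q / p - 1 := Real.log_le_sub_one_of_pos (div_pos hs0 h0)
  have e2 : Real.log ((1 - q) / (1 - p)) ≤ (1 - q) / (1 - p) - 1 :=
    Real.log_le_sub_one_of_pos (div_pos (by linarith) (by linarith))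
  rw [Real.log_div hs0.ne' h0.ne'] at e1
  rw [Real.log_div (by linarith : (1:ℝ) - q ≠ 0) (by linarith : (1:ℝ) - p ≠ 0)] at e2
  have d1 : q / p - 1 = (q - p) / p := by field_simp
  have d2 : (1 - q) / (1 - p) - 1 = (p - q) / (1 - p) := by rw [div_sub_one (by linarith : (1:ℝ) - p ≠ 0)]; ring_nf
  rw [d1] at e1; rw [d2] at e2
  nlinarith [mul_le_mul_of_nonneg_left e1 h0.le, mul_le_mul_of_nonneg_left e2 (by linarith : (0:ℝ) ≤ 1 - p),
    mul_div_cancel₀ (q - p) h0.ne', mul_div_cancel₀ (p - q) (by linarith : (1:ℝ) - p ≠ 0)]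

lemma measurable_logit : Measurable logit :=
  Real.measurable_log.comp (measurable_id.div (measurable_const.sub measurable_id))

lemma logit_injOn : Set.InjOn logit (Set.Ioo (0:ℝ) 1) := by
  intro p hp q hq h
  have := congrArg sigmoid h
  rwa [sigmoid_logit hp, sigmoid_logit hq] at this

lemma CE_decomp (t y : ℝ) :
    CE t y = (-Real.log (sigmoid t)) * y + (-Real.log (1 - sigmoid t)) * (1 - y) := by
  unfold CE; ring

lemma measurable_sigmoid : Measurable sigmoid := by
  apply Measurable.div measurable_const
  exact measurable_const.add (Real.measurable_exp.comp measurable_neg)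

lemma integral_CE_swap
    {Ω : Type*} [mΩ : MeasurableSpace Ω] (μ : Measure Ω) [IsProbabilityMeasure μ]
    {d : ℕ} (X : Ω → (Fin d → ℝ)) (hX : Measurable X)
    (Yi : Ω → ℝ) (hYi : Measurable Yi) (hYi01 : ∀ ω, Yi ω ∈ Set.Icc (0:ℝ) 1)
    (ξi : (Fin d → ℝ) → ℝ) (hξi : Measurable ξi)
    (hcond : (fun ω => ξi (X ω)) =ᵐ[μ] μ[Yi | MeasurableSpace.comap X inferInstance])
    (f : (Fin d → ℝ) → ℝ) (hf : Measurable f)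
    (hInt : Integrable (fun ω => CE (f (X ω)) (Yi ω)) μ) :
    Integrable (fun ω => CE (f (X ω)) (ξi (X ω))) μ ∧
    ∫ ω, CE (f (X ω)) (Yi ω) ∂μ = ∫ ω, CE (f (X ω)) (ξi (X ω)) ∂μ := by
  have hm' : MeasurableSpace.comap X inferInstance ≤ mΩ := hX.comap_le
  set a : Ω → ℝ := fun ω => -Real.log (sigmoid (f (X ω))) with ha_def
  set b : Ω → ℝ := fun ω => -Real.log (1 - sigmoid (f (X ω))) with hb_def
  have ha_nonneg : ∀ ω, 0 ≤ a ω := fun ω => by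
    have := sigmoid_mem_Ioo (f (X ω))
    simpa [ha_def] using Real.log_nonpos this.1.le this.2.le
  have hb_nonneg : ∀ ω, 0 ≤ b ω := fun ω => by
    have h := sigmoid_mem_Ioo (f (X ω))
    simp only [hb_def, neg_nonneg]
    exact Real.log_nonpos (by linarith [h.2]) (by linarith [h.1])
  have hXm' : @Measurable Ω (Fin d → ℝ) (MeasurableSpace.comap X inferInstance) _ X :=
    fun s hs => ⟨s, hs, rfl⟩
  have hga : Measurable fun x => -Real.log (sigmoid (f x)) :=
    (Real.measurable_log.comp (measurable_sigmoid.comp hf)).neg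
  have hgb : Measurable fun x => -Real.log (1 - sigmoid (f x)) :=
    (Real.measurable_log.comp (measurable_const.sub (measurable_sigmoid.comp hf))).neg
  have haSM : StronglyMeasurable[MeasurableSpace.comap X inferInstance] a :=
    Measurable.stronglyMeasurable (hga.comp hXm')
  have hbSM : StronglyMeasurable[MeasurableSpace.comap X inferInstance] b :=
    Measurable.stronglyMeasurable (hgb.comp hXm')
  have haM : Measurable a := hga.comp hX
  have hbM : Measurable b := hgb.comp hX
  have hYiInt : Integrable Yi μ := by
    refine Integrable.mono' (integrable_const 1) hYi.aestronglyMeasurable ?_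
    exact Filter.Eventually.of_forall fun ω => by
      rw [Real.norm_eq_abs, abs_le]; exact ⟨by linarith [(hYi01 ω).1], (hYi01 ω).2⟩
  have hZiInt : Integrable (fun ω => 1 - Yi ω) μ := (integrable_const 1).sub hYiInt
  have hCE_eq : ∀ ω, CE (f (X ω)) (Yi ω) = a ω * Yi ω + b ω * (1 - Yi ω) := fun ω =>
    CE_decomp _ _
  have haY : Integrable (fun ω => a ω * Yi ω) μ := by
    refine Integrable.mono' hInt ((haM.mul hYi).aestronglyMeasurable) ?_
    refine Filter.Eventually.of_forall fun ω => ?_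
    have h1 : 0 ≤ a ω * Yi ω := mul_nonneg (ha_nonneg ω) (hYi01 ω).1
    have h2 : 0 ≤ b ω * (1 - Yi ω) := mul_nonneg (hb_nonneg ω) (by linarith [(hYi01 ω).2])
    rw [Real.norm_eq_abs, abs_of_nonneg h1, hCE_eq ω]; linarith
  have hbZ : Integrable (fun ω => b ω * (1 - Yi ω)) μ := by
    refine Integrable.mono' hInt ((hbM.mul (measurable_const.sub hYi)).aestronglyMeasurable) ?_
    refine Filter.Eventually.of_forall fun ω => ?_
    have h1 : 0 ≤ a ω * Yi ω := mul_nonneg (ha_nonneg ω) (hYi01 ω).1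
    have h2 : 0 ≤ b ω * (1 - Yi ω) := mul_nonneg (hb_nonneg ω) (by linarith [(hYi01 ω).2])
    rw [Real.norm_eq_abs, abs_of_nonneg h2, hCE_eq ω]; linarith
  have hcond' : μ[Yi | MeasurableSpace.comap X inferInstance] =ᵐ[μ] fun ω => ξi (X ω) :=
    hcond.symm
  have hcondZ : μ[(fun ω => 1 - Yi ω) | MeasurableSpace.comap X inferInstance]
      =ᵐ[μ] fun ω => 1 - ξi (X ω) := by
    have h1 : μ[(fun _ => (1:ℝ)) - Yi | MeasurableSpace.comap X inferInstance]
        =ᵐ[μ] μ[(fun _ => (1:ℝ)) | MeasurableSpace.comap X inferInstance]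
          - μ[Yi | MeasurableSpace.comap X inferInstance] :=
      condExp_sub (integrable_const 1) hYiInt _
    have h2 : μ[(fun _ => (1:ℝ)) | MeasurableSpace.comap X inferInstance] = fun _ => (1:ℝ) :=
      condExp_const (μ := μ) hm' (1:ℝ)
    filter_upwards [h1, hcond'] with ω hω hω'
    rw [show (fun ω => 1 - Yi ω) = (fun _ => (1:ℝ)) - Yi from rfl]
    simpa [h2, hω'] using hω
  have haYc : μ[(fun ω => a ω * Yi ω) | MeasurableSpace.comap X inferInstance]
      =ᵐ[μ] fun ω => a ω * ξi (X ω) := by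
    have h1 : μ[a * Yi | MeasurableSpace.comap X inferInstance]
        =ᵐ[μ] a * μ[Yi | MeasurableSpace.comap X inferInstance] :=
      condExp_mul_of_stronglyMeasurable_left haSM haY hYiInt
    filter_upwards [h1, hcond'] with ω hω hω'
    rw [show (fun ω => a ω * Yi ω) = a * Yi from rfl]
    simpa [hω'] using hω
  have hbZc : μ[(fun ω => b ω * (1 - Yi ω)) | MeasurableSpace.comap X inferInstance]
      =ᵐ[μ] fun ω => b ω * (1 - ξi (X ω)) := by
    have h1 : μ[b * (fun ω => 1 - Yi ω) | MeasurableSpace.comap X inferInstance]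
        =ᵐ[μ] b * μ[(fun ω => 1 - Yi ω) | MeasurableSpace.comap X inferInstance] :=
      condExp_mul_of_stronglyMeasurable_left hbSM hbZ hZiInt
    filter_upwards [h1, hcondZ] with ω hω hω'
    rw [show (fun ω => b ω * (1 - Yi ω)) = b * (fun ω => 1 - Yi ω) from rfl]
    simpa [hω'] using hω
  have haξInt : Integrable (fun ω => a ω * ξi (X ω)) μ := integrable_condExp.congr haYc
  have hbξInt : Integrable (fun ω => b ω * (1 - ξi (X ω))) μ := integrable_condExp.congr hbZc
  have hIa : ∫ ω, a ω * Yi ω ∂μ = ∫ ω, a ω * ξi (X ω) ∂μ := by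
    rw [← integral_condExp (μ := μ) hm' (f := fun ω => a ω * Yi ω)]
    exact integral_congr_ae haYc
  have hIb : ∫ ω, b ω * (1 - Yi ω) ∂μ = ∫ ω, b ω * (1 - ξi (X ω)) ∂μ := by
    rw [← integral_condExp (μ := μ) hm' (f := fun ω => b ω * (1 - Yi ω))]
    exact integral_congr_ae hbZc
  have hCEξ_eq : ∀ ω, CE (f (X ω)) (ξi (X ω)) = a ω * ξi (X ω) + b ω * (1 - ξi (X ω)) :=
    fun ω => CE_decomp _ _
  constructor
  · exact ((haξInt.add hbξInt).congr
      (Filter.Eventually.of_forall fun ω => (hCEξ_eq ω).symm))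
  · calc ∫ ω, CE (f (X ω)) (Yi ω) ∂μ
        = ∫ ω, a ω * Yi ω + b ω * (1 - Yi ω) ∂μ := integral_congr_ae
          (Filter.Eventually.of_forall hCE_eq)
      _ = (∫ ω, a ω * Yi ω ∂μ) + ∫ ω, b ω * (1 - Yi ω) ∂μ := integral_add haY hbZ
      _ = (∫ ω, a ω * ξi (X ω) ∂μ) + ∫ ω, b ω * (1 - ξi (X ω)) ∂μ := by rw [hIa, hIb]
      _ = ∫ ω, CE (f (X ω)) (ξi (X ω)) ∂μ := by
          rw [← integral_add haξInt hbξInt]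
          exact integral_congr_ae (Filter.Eventually.of_forall fun ω => (hCEξ_eq ω).symm)

lemma klDiv_self' {α : Type*} [MeasurableSpace α] (ν : Measure α) [SigmaFinite ν] :
    (if ν ≪ ν ∧ Integrable (llr ν ν) ν then ENNReal.ofReal (∫ x, llr ν ν x ∂ν) else ⊤) = 0 := by
  have hll : llr ν ν =ᵐ[ν] fun _ => (0:ℝ) := by
    filter_upwards [ν.rnDeriv_self] with x hx
    simp [llr, hx]
  rw [if_pos ⟨Measure.AbsolutelyContinuous.refl _,
    (integrable_zero _ _ _).congr hll.symm⟩, integral_congr_ae hll]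
  simp

lemma klDiv_self {α : Type*} [MeasurableSpace α] (ν : Measure α) [SigmaFinite ν] :
    klDiv ν ν = 0 := by
  unfold klDiv; exact klDiv_self' ν

/-- Theorem 1 of the paper, cross-entropy case. With `E*_i = logit ∘ ξ_i` for
`i ≤ m` (and `0` otherwise) and `ν*` the law of `(X, E*(X))`, the pair `(E*, ν*)` is a global
minimizer of `KL(law(X,E(X)), ν) + λ·Σᵢ 𝔼[CE(Eᵢ(X), Yᵢ)]`; the minimum value equals
`λ·Σᵢ 𝔼[CE(logit(ξᵢ(X)), Yᵢ)]`, and `E*` is disentangled w.r.t. `ξ` with `g_i = σ⁻¹ = logit`. -/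
theorem DEAR_identifiability_crossEntropy
    {Ω : Type*} [MeasurableSpace Ω] (μ : Measure Ω) [IsProbabilityMeasure μ]
    {d m k : ℕ} (hmk : m ≤ k)
    (X : Ω → (Fin d → ℝ)) (hX : Measurable X)
    (Y : Ω → (Fin m → ℝ)) (hY : Measurable Y)
    (hY01 : ∀ ω i, Y ω i ∈ Set.Icc (0 : ℝ) 1)
    (lam : ℝ) (hlam : 0 < lam)
    (ξ : Fin m → (Fin d → ℝ) → ℝ) (hξ : ∀ i, Measurable (ξ i))
    (hξ01 : ∀ i x, ξ i x ∈ Set.Ioo (0 : ℝ) 1)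
    (hcond : ∀ i, (fun ω => ξ i (X ω))
      =ᵐ[μ] μ[fun ω => Y ω i | MeasurableSpace.comap X inferInstance])
    (Estar : (Fin d → ℝ) → (Fin k → ℝ))
    (hEstar : ∀ x (i : Fin k),
      Estar x i = if h : (i : ℕ) < m then logit (ξ ⟨i, h⟩ x) else 0) :
    (∀ (E : (Fin d → ℝ) → (Fin k → ℝ)), Measurable E →
      (∀ i : Fin m, Integrable (fun ω => CE (E (X ω) (Fin.castLE hmk i)) (Y ω i)) μ) →
      ∀ (ν : Measure ((Fin d → ℝ) × (Fin k → ℝ))), IsProbabilityMeasure ν →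
        klDiv (Measure.map (fun ω => (X ω, Estar (X ω))) μ)
            (Measure.map (fun ω => (X ω, Estar (X ω))) μ)
          + ENNReal.ofReal
              (lam * ∑ i : Fin m, ∫ ω, CE (Estar (X ω) (Fin.castLE hmk i)) (Y ω i) ∂μ)
        ≤ klDiv (Measure.map (fun ω => (X ω, E (X ω))) μ) ν
          + ENNReal.ofReal
              (lam * ∑ i : Fin m, ∫ ω, CE (E (X ω) (Fin.castLE hmk i)) (Y ω i) ∂μ))
    ∧ klDiv (Measure.map (fun ω => (X ω, Estar (X ω))) μ)
          (Measure.map (fun ω => (X ω, Estar (X ω))) μ)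
        + ENNReal.ofReal
            (lam * ∑ i : Fin m, ∫ ω, CE (Estar (X ω) (Fin.castLE hmk i)) (Y ω i) ∂μ)
      = ENNReal.ofReal (lam * ∑ i : Fin m, ∫ ω, CE (logit (ξ i (X ω))) (Y ω i) ∂μ)
    ∧ ∀ i : Fin m, Set.InjOn logit (Set.Ioo (0 : ℝ) 1)
        ∧ ∀ x, Estar x (Fin.castLE hmk i) = logit (ξ i x) := by
  -- begin proof
  have hEstar_coord : ∀ (i : Fin m) x, Estar x (Fin.castLE hmk i) = logit (ξ i x) := by
    intro i x
    have hlt : ((Fin.castLE hmk i : Fin k) : ℕ) < m := by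
      simpa using i.isLt
    rw [hEstar x (Fin.castLE hmk i), dif_pos hlt]
    congr 1
  have hEstarM : Measurable Estar := by
    apply measurable_pi_lambda
    intro i
    have : (fun x => Estar x i)
        = fun x => if h : (i : ℕ) < m then logit (ξ ⟨i, h⟩ x) else 0 :=
      funext fun x => hEstar x i
    rw [this]
    by_cases h : (i : ℕ) < m
    · simp only [dif_pos h]; exact measurable_logit.comp (hξ _)
    · simp only [dif_neg h]; exact measurable_const
  have hmapM : Measurable (fun ω => (X ω, Estar (X ω))) := hX.prodMk (hEstarM.comp hX)
  have hPM : IsProbabilityMeasure (Measure.map (fun ω => (X ω, Estar (X ω))) μ) :=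
    Measure.isProbabilityMeasure_map hmapM.aemeasurable
  have hKL0 : klDiv (Measure.map (fun ω => (X ω, Estar (X ω))) μ)
      (Measure.map (fun ω => (X ω, Estar (X ω))) μ) = 0 := klDiv_self _
  have hEstarCE : ∀ (i : Fin m),
      (fun ω => CE (Estar (X ω) (Fin.castLE hmk i)) (Y ω i))
        = fun ω => CE (logit (ξ i (X ω))) (Y ω i) :=
    fun i => funext fun ω => by rw [hEstar_coord i (X ω)]
  -- per-coordinate inequality
  have hkey : ∀ (E : (Fin d → ℝ) → (Fin k → ℝ)), Measurable E →
      (∀ i : Fin m, Integrable (fun ω => CE (E (X ω) (Fin.castLE hmk i)) (Y ω i)) μ) →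
      ∀ i : Fin m,
        ∫ ω, CE (logit (ξ i (X ω))) (Y ω i) ∂μ
          ≤ ∫ ω, CE (E (X ω) (Fin.castLE hmk i)) (Y ω i) ∂μ := by
    intro E hE hEInt i
    have hYi : Measurable fun ω => Y ω i := (measurable_pi_apply i).comp hY
    have hYi01 : ∀ ω, Y ω i ∈ Set.Icc (0:ℝ) 1 := fun ω => hY01 ω i
    have hEi : Measurable fun x => E x (Fin.castLE hmk i) :=
      (measurable_pi_apply _).comp hE
    have hfstar : Measurable fun x => logit (ξ i x) := measurable_logit.comp (hξ i)
    obtain ⟨hI2, he2⟩ := integral_CE_swap μ X hX (fun ω => Y ω i) hYi hYi01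
      (ξ i) (hξ i) (hcond i) (fun x => E x (Fin.castLE hmk i)) hEi (hEInt i)
    by_cases h : Integrable (fun ω => CE (logit (ξ i (X ω))) (Y ω i)) μ
    · obtain ⟨hI1, he1⟩ := integral_CE_swap μ X hX (fun ω => Y ω i) hYi hYi01
        (ξ i) (hξ i) (hcond i) (fun x => logit (ξ i x)) hfstar h
      rw [he1, he2]
      exact integral_mono hI1 hI2 fun ω => gibbs (hξ01 i (X ω)) _
    · rw [integral_undef h]
      exact integral_nonneg fun ω => CE_nonneg _ (hY01 ω i)
  refine ⟨?_, ?_, ?_⟩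
  · intro E hE hEInt ν hν
    rw [hKL0, zero_add]
    have hS : (∑ i : Fin m, ∫ ω, CE (Estar (X ω) (Fin.castLE hmk i)) (Y ω i) ∂μ)
        ≤ ∑ i : Fin m, ∫ ω, CE (E (X ω) (Fin.castLE hmk i)) (Y ω i) ∂μ := by
      refine Finset.sum_le_sum fun i _ => ?_
      rw [hEstarCE i]
      exact hkey E hE hEInt i
    calc ENNReal.ofReal
          (lam * ∑ i : Fin m, ∫ ω, CE (Estar (X ω) (Fin.castLE hmk i)) (Y ω i) ∂μ)
        ≤ ENNReal.ofReal
          (lam * ∑ i : Fin m, ∫ ω, CE (E (X ω) (Fin.castLE hmk i)) (Y ω i) ∂μ) :=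
          ENNReal.ofReal_le_ofReal (mul_le_mul_of_nonneg_left hS hlam.le)
      _ ≤ _ := le_add_self
  · rw [hKL0, zero_add]
    congr 1
    congr 1
    exact Finset.sum_congr rfl fun i _ => by rw [hEstarCE i]
  · exact fun i => ⟨logit_injOn, fun x => hEstar_coord i x⟩
end

section
/- Let V : ℝ^n → ℝ^n be a continuously differentiable vector field with compact support, and let μ be a finite measure on ℝ^n with continuously differentiable density p with respect to Lebesgue measure. For t ∈ ℝ define T_t : ℝ^n → ℝ^n by T_t(y) = y + t·V(y). Then there exists t₀ > 0 such that for all |t| < t₀: T_t is a C¹ diffeomorphism of ℝ^n, the pushforward (T_t)_*μ has a density p_t with respect to Lebesgue measure, and for every y ∈ ℝ^n the map t ↦ p_t(y) is differentiable at t = 0 with derivative ∂_t p_t(y)|_{t=0} = −⟨∇p(y), V(y)⟩ − p(y)·(∇·V)(y), where ∇·V = Σ_{j=1}^n ∂V_j/∂y_j is the divergence of V. -/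
open MeasureTheory Filter Topology

section Aux

open Asymptotics

/-- If `W` is continuous at `0`, then `t ↦ t • W t` has derivative `W 0` at `0`. -/
lemma hasDerivAt_smul_of_continuousAt {F : Type*} [NormedAddCommGroup F] [NormedSpace ℝ F]
    {W : ℝ → F} (h : ContinuousAt W 0) : HasDerivAt (fun t => t • W t) (W 0) 0 := by
  rw [hasDerivAt_iff_isLittleO]
  have hlil : (fun t : ℝ => W t - W 0) =o[nhds 0] (fun _ => (1 : ℝ)) := by
    rw [Asymptotics.isLittleO_one_iff]
    simpa using h.tendsto.sub_const (W 0)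
  have h1 : (fun t : ℝ => t • (W t - W 0)) =o[nhds 0] fun t => t := by
    simpa using (isBigO_refl (fun t : ℝ => t) (nhds 0)).smul_isLittleO hlil
  refine h1.congr' (Filter.Eventually.of_forall fun t => ?_) (Filter.Eventually.of_forall fun t => by simp)
  simp [smul_sub]

/-- The determinant as a continuous multilinear map in the rows. -/
noncomputable def detCM (n : ℕ) :
    ContinuousMultilinearMap ℝ (fun _ : Fin n => (Fin n → ℝ)) ℝ :=
  MultilinearMap.mkContinuous
    (Matrix.detRowAlternating (n := Fin n) (R := ℝ)).toMultilinearMap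
    (Fintype.card (Equiv.Perm (Fin n))) <| by
  intro m
  have hdet : (Matrix.detRowAlternating (n := Fin n) (R := ℝ)).toMultilinearMap m
      = (Matrix.of m).det := rfl
  rw [hdet, Matrix.det_apply', Real.norm_eq_abs]
  have hterm : ∀ σ : Equiv.Perm (Fin n),
      |(Equiv.Perm.sign σ : ℤ) * ∏ i, Matrix.of m (σ i) i| ≤ ∏ i, ‖m i‖ := by
    intro σ
    rw [abs_mul]
    have h1 : |((Equiv.Perm.sign σ : ℤ) : ℝ)| = 1 := by
      rcases Int.units_eq_one_or (Equiv.Perm.sign σ) with h | h <;> simp [h]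
    rw [h1, one_mul, Finset.abs_prod]
    calc ∏ i, |Matrix.of m (σ i) i| ≤ ∏ i, ‖m (σ i)‖ := by
          refine Finset.prod_le_prod (fun _ _ => abs_nonneg _) fun i _ => ?_
          simpa [Real.norm_eq_abs] using norm_le_pi_norm (m (σ i)) i
      _ = ∏ i, ‖m i‖ := Equiv.prod_comp σ fun i => ‖m i‖
  calc |∑ σ : Equiv.Perm (Fin n), ((Equiv.Perm.sign σ : ℤ) : ℝ) * ∏ i, Matrix.of m (σ i) i|
      ≤ ∑ σ : Equiv.Perm (Fin n), |((Equiv.Perm.sign σ : ℤ) : ℝ) * ∏ i, Matrix.of m (σ i) i| :=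
        Finset.abs_sum_le_sum_abs _ _
    _ ≤ ∑ _σ : Equiv.Perm (Fin n), ∏ i, ‖m i‖ := Finset.sum_le_sum fun σ _ => by
        simpa using hterm σ
    _ = (Fintype.card (Equiv.Perm (Fin n)) : ℝ) * ∏ i, ‖m i‖ := by
        simp [Finset.sum_const, Finset.card_univ, nsmul_eq_mul]

lemma detCM_apply {n : ℕ} (v : Fin n → Fin n → ℝ) : detCM n v = (Matrix.of v).det := by
  simp only [detCM, MultilinearMap.coe_mkContinuous]
  rfl

lemma det_updateRow_one {n : ℕ} (i : Fin n) (v : Fin n → ℝ) :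
    (Matrix.updateRow (1 : Matrix (Fin n) (Fin n) ℝ) i v).det = v i := by
  have h1 : Matrix.transpose (Matrix.updateCol (1 : Matrix (Fin n) (Fin n) ℝ) i v)
      = Matrix.updateRow (1 : Matrix (Fin n) (Fin n) ℝ) i v := by
    rw [← Matrix.updateRow_transpose, Matrix.transpose_one]
  rw [← h1, Matrix.det_transpose, ← Matrix.cramer_apply, Matrix.cramer_one]
  rfl

end Aux

/-- directional form of Lemma 2 of the paper. Let `V : ℝ^n → ℝ^n` be a `C¹`
compactly supported vector field and let `μ` be a finite measure with `C¹` density `p ≥ 0` with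
respect to Lebesgue measure. With `T_t(y) = y + t·V(y)`, there is `t₀ > 0` such that for
`|t| < t₀`, `T_t` is a `C¹` diffeomorphism, the pushforward `(T_t)_*μ` has a density `p_t`, and
for every `y`, `t ↦ p_t(y)` is differentiable at `0` with derivative
`−⟨∇p(y), V(y)⟩ − p(y)·(∇·V)(y)`. -/
theorem pushforward_density_derivative
    {n : ℕ} (V : (Fin n → ℝ) → (Fin n → ℝ))
    (hV : ContDiff ℝ 1 V) (hVsupp : HasCompactSupport V)
    (p : (Fin n → ℝ) → ℝ) (hp : ContDiff ℝ 1 p) (hp0 : ∀ x, 0 ≤ p x)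
    (hfin : IsFiniteMeasure (volume.withDensity fun x => ENNReal.ofReal (p x))) :
    ∃ t₀ : ℝ, 0 < t₀ ∧ ∃ pt : ℝ → (Fin n → ℝ) → ℝ,
      (∀ t : ℝ, |t| < t₀ →
        (∃ S : (Fin n → ℝ) → (Fin n → ℝ), ContDiff ℝ 1 S ∧
          Function.LeftInverse S (fun y => y + t • V y) ∧
          Function.RightInverse S (fun y => y + t • V y)) ∧
        Measure.map (fun y => y + t • V y)
            (volume.withDensity fun x => ENNReal.ofReal (p x))
          = volume.withDensity fun y => ENNReal.ofReal (pt t y)) ∧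
      ∀ y : Fin n → ℝ,
        HasDerivAt (fun t => pt t y)
          (-(fderiv ℝ p y (V y))
            - p y * ∑ j : Fin n, fderiv ℝ V y (Pi.single j 1) j) 0 := by
  classical
  -- basic bounds
  obtain ⟨CV, hCV⟩ := hVsupp.exists_bound_of_continuous hV.continuous
  obtain ⟨K, hK⟩ := hV.lipschitzWith_of_hasCompactSupport hVsupp one_ne_zero
  obtain ⟨CD, hCD⟩ := (hVsupp.fderiv ℝ).exists_bound_of_continuous (hV.continuous_fderiv one_ne_zero)
  have hR0 : (0 : ℝ) ≤ max (K : ℝ) CD := le_trans K.coe_nonneg (le_max_left _ _)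
  set R : ℝ := max (K : ℝ) CD + 1 with hRdef
  have hRpos : 0 < R := by positivity
  refine ⟨R⁻¹, by positivity, ?_⟩
  have hsmall : ∀ {t : ℝ}, |t| < R⁻¹ → |t| * max (K : ℝ) CD < 1 := by
    intro t ht
    have h1 : |t| * max (K : ℝ) CD ≤ R⁻¹ * max (K : ℝ) CD :=
      mul_le_mul_of_nonneg_right ht.le hR0
    have h2 : R⁻¹ * max (K : ℝ) CD < R⁻¹ * R := by
      have : max (K : ℝ) CD < R := by simp [hRdef]
      exact mul_lt_mul_of_pos_left this (by positivity)
    have h3 : R⁻¹ * R = 1 := inv_mul_cancel₀ hRpos.ne'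
    linarith
  have hKt : ∀ {t : ℝ}, |t| < R⁻¹ → |t| * (K : ℝ) < 1 := fun {t} ht =>
    lt_of_le_of_lt (mul_le_mul_of_nonneg_left (le_max_left _ _) (abs_nonneg t)) (hsmall ht)
  have hCDt : ∀ {t : ℝ}, |t| < R⁻¹ → |t| * CD < 1 := fun {t} ht =>
    lt_of_le_of_lt (mul_le_mul_of_nonneg_left (le_max_right _ _) (abs_nonneg t)) (hsmall ht)
  -- the maps
  set T : ℝ → (Fin n → ℝ) → (Fin n → ℝ) := fun t y => y + t • V y with hTdef
  have hTcd : ∀ t, ContDiff ℝ 1 (T t) := fun t => contDiff_id.add (hV.const_smul t)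
  set DT : ℝ → (Fin n → ℝ) → ((Fin n → ℝ) →L[ℝ] (Fin n → ℝ)) :=
    fun t x => ContinuousLinearMap.id ℝ _ + t • fderiv ℝ V x with hDTdef
  have hDT : ∀ t x, HasFDerivAt (T t) (DT t x) x := fun t x =>
    (hasFDerivAt_id x).add (((hV.differentiable one_ne_zero) x).hasFDerivAt.const_smul t)
  have hDTapp : ∀ t x v, DT t x v = v + t • fderiv ℝ V x v := by
    intro t x v
    simp [hDTdef]
  -- injectivity of T t
  have hVsub : ∀ a b, ‖V a - V b‖ ≤ (K : ℝ) * ‖a - b‖ := by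
    intro a b
    have := hK.dist_le_mul a b
    simpa [dist_eq_norm] using this
  have hinj : ∀ {t : ℝ}, |t| < R⁻¹ → Function.Injective (T t) := by
    intro t ht a b hab
    have h2 : a - b = t • V b - t • V a :=
      sub_eq_sub_iff_add_eq_add.mpr
        ((show a + t • V a = b + t • V b from hab).trans (add_comm _ _))
    have h3 : ‖a - b‖ ≤ |t| * (K : ℝ) * ‖a - b‖ := by
      calc ‖a - b‖ = |t| * ‖V b - V a‖ := by
            rw [h2, ← smul_sub, norm_smul, Real.norm_eq_abs]
        _ ≤ |t| * ((K : ℝ) * ‖b - a‖) :=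
            mul_le_mul_of_nonneg_left (hVsub b a) (abs_nonneg t)
        _ = |t| * (K : ℝ) * ‖a - b‖ := by rw [norm_sub_rev]; ring
    by_contra hne
    have h4 : 0 < ‖a - b‖ := by
      simpa [sub_eq_zero] using norm_pos_iff.mpr (sub_ne_zero.mpr hne)
    nlinarith [hKt ht]
  -- surjectivity of T t
  have hsurj : ∀ {t : ℝ}, |t| < R⁻¹ → Function.Surjective (T t) := by
    intro t ht y
    set Φ : (Fin n → ℝ) → (Fin n → ℝ) := fun x => y - t • V x with hΦdef
    have hΦlip : LipschitzWith (⟨|t|, abs_nonneg t⟩ * K) Φ := by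
      apply LipschitzWith.of_dist_le_mul
      intro a b
      have : Φ a - Φ b = t • (V b - V a) := by
        simp only [hΦdef, smul_sub]
        abel
      calc dist (Φ a) (Φ b) = ‖Φ a - Φ b‖ := dist_eq_norm _ _
        _ = |t| * ‖V b - V a‖ := by rw [this, norm_smul, Real.norm_eq_abs]
        _ ≤ |t| * ((K : ℝ) * ‖b - a‖) :=
            mul_le_mul_of_nonneg_left (hVsub b a) (abs_nonneg t)
        _ = (⟨|t|, abs_nonneg t⟩ * K : NNReal) * dist a b := by
            rw [dist_eq_norm, norm_sub_rev]
            push_cast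
            show |t| * ((K : ℝ) * ‖a - b‖) = (|t| * (K : ℝ)) * ‖a - b‖
            ring
    have hcontr : ContractingWith (⟨|t|, abs_nonneg t⟩ * K) Φ := by
      refine ⟨?_, hΦlip⟩
      rw [← NNReal.coe_lt_coe]
      push_cast
      exact hKt ht
    obtain ⟨x, hx⟩ : ∃ x, y - t • V x = x := ⟨hcontr.fixedPoint Φ, hcontr.fixedPoint_isFixedPt⟩
    refine ⟨x, ?_⟩
    show x + t • V x = y
    nth_rewrite 1 [← hx]
    abel
  -- the inverse maps
  set S : ℝ → (Fin n → ℝ) → (Fin n → ℝ) := fun t => Function.invFun (T t) with hSdef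
  have hleft : ∀ {t : ℝ}, |t| < R⁻¹ → Function.LeftInverse (S t) (T t) := by
    intro t ht
    exact Function.leftInverse_invFun (hinj ht)
  have hright : ∀ {t : ℝ}, |t| < R⁻¹ → Function.RightInverse (S t) (T t) := by
    intro t ht
    exact Function.rightInverse_invFun (hsurj ht)
  -- invertibility of the differential
  have hDTbij : ∀ {t : ℝ}, |t| < R⁻¹ → ∀ x, Function.Bijective (DT t x) := by
    intro t ht x
    have hinj' : Function.Injective (DT t x) := by
      intro v w hvw
      have hvw' : v + t • fderiv ℝ V x v = w + t • fderiv ℝ V x w := by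
        rw [← hDTapp t x v, ← hDTapp t x w, hvw]
      have h2 : v - w = t • fderiv ℝ V x w - t • fderiv ℝ V x v :=
        sub_eq_sub_iff_add_eq_add.mpr (hvw'.trans (add_comm _ _))
      have h3 : ‖v - w‖ ≤ |t| * CD * ‖v - w‖ := by
        calc ‖v - w‖ = |t| * ‖fderiv ℝ V x (w - v)‖ := by
              rw [h2, ← smul_sub, ← map_sub, norm_smul, Real.norm_eq_abs]
          _ ≤ |t| * (‖fderiv ℝ V x‖ * ‖w - v‖) :=
              mul_le_mul_of_nonneg_left ((fderiv ℝ V x).le_opNorm _) (abs_nonneg t)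
          _ ≤ |t| * (CD * ‖w - v‖) := by
              have := mul_le_mul_of_nonneg_right (hCD x) (norm_nonneg (w - v))
              exact mul_le_mul_of_nonneg_left this (abs_nonneg t)
          _ = |t| * CD * ‖v - w‖ := by rw [norm_sub_rev]; ring
      by_contra hne
      have h4 : 0 < ‖v - w‖ := by
        simpa [sub_eq_zero] using norm_pos_iff.mpr (sub_ne_zero.mpr hne)
      nlinarith [hCDt ht]
    exact ⟨hinj', LinearMap.injective_iff_surjective.mp hinj'⟩
  -- C¹ inverse
  have hScd : ∀ {t : ℝ}, |t| < R⁻¹ → ContDiff ℝ 1 (S t) := by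
    intro t ht
    rw [contDiff_iff_contDiffAt]
    intro z
    set x := S t z with hxdef
    have hTx : T t x = z := hright ht z
    set eqv : (Fin n → ℝ) ≃ₗ[ℝ] (Fin n → ℝ) :=
      LinearEquiv.ofBijective (DT t x).toLinearMap (hDTbij ht x) with heqvdef
    set ceqv : (Fin n → ℝ) ≃L[ℝ] (Fin n → ℝ) := eqv.toContinuousLinearEquiv with hceqvdef
    have hco : (ceqv : (Fin n → ℝ) →L[ℝ] (Fin n → ℝ)) = DT t x := by
      ext v
      rfl
    have hfd : HasFDerivAt (T t) ((ceqv : (Fin n → ℝ) ≃L[ℝ] (Fin n → ℝ)) :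
        (Fin n → ℝ) →L[ℝ] (Fin n → ℝ)) x := by
      rw [hco]; exact hDT t x
    have cda : ContDiffAt ℝ 1 (T t) x := (hTcd t).contDiffAt
    have hli : ContDiffAt ℝ 1 (cda.localInverse hfd one_ne_zero) (T t x) :=
      cda.to_localInverse hfd one_ne_zero
    have hevr : ∀ᶠ w in nhds (T t x), T t (cda.localInverse hfd one_ne_zero w) = w :=
      (cda.hasStrictFDerivAt' hfd one_ne_zero).eventually_right_inverse
    have hSeq : S t =ᶠ[nhds z] cda.localInverse hfd one_ne_zero := by
      rw [hTx] at hevr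
      filter_upwards [hevr] with w hw
      exact hinj ht (by rw [hright ht w, hw])
    rw [← hTx]
    exact hli.congr_of_eventuallyEq (by rw [hTx]; exact hSeq)
  -- determinant nonvanishing
  have hdetne : ∀ {t : ℝ}, |t| < R⁻¹ → ∀ x, (DT t x).det ≠ 0 := by
    intro t ht x
    have := (LinearEquiv.isUnit_det'
      (LinearEquiv.ofBijective (DT t x).toLinearMap (hDTbij ht x))).ne_zero
    exact this
  -- the density
  set pt : ℝ → (Fin n → ℝ) → ℝ := fun t y => p (S t y) * |(DT t (S t y)).det|⁻¹ with hptdef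
  refine ⟨pt, ?_, ?_⟩
  · -- diffeomorphism + pushforward density, for each |t| < t₀
    intro t ht
    refine ⟨⟨S t, hScd ht, hleft ht, hright ht⟩, ?_⟩
    have hTmeas : Measurable (T t) := (hTcd t).continuous.measurable
    refine Measure.ext fun A hA => ?_
    rw [Measure.map_apply hTmeas hA, withDensity_apply _ (hTmeas hA), withDensity_apply _ hA]
    have himg : T t '' (T t ⁻¹' A) = A := Set.image_preimage_eq A (hsurj ht)
    conv_rhs => rw [← himg]
    rw [lintegral_image_eq_lintegral_abs_det_fderiv_mul volume (hTmeas hA)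
      (fun x _ => (hDT t x).hasFDerivWithinAt) ((hinj ht).injOn) _]
    refine lintegral_congr fun x => ?_
    have hSx : S t (T t x) = x := hleft ht x
    have hptx : pt t (T t x) = p x * |(DT t x).det|⁻¹ := by rw [hptdef]; simp only; rw [hSx]
    rw [hptx, ← ENNReal.ofReal_mul (abs_nonneg _)]
    congr 1
    have hne : |(DT t x).det| ≠ 0 := abs_ne_zero.mpr (hdetne ht x)
    field_simp
  · -- the derivative at 0
    intro y
    have h0 : |(0 : ℝ)| < R⁻¹ := by simp; positivity
    set s : ℝ → (Fin n → ℝ) := fun t => S t y with hsdef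
    have hnb : {t : ℝ | |t| < R⁻¹} ∈ nhds (0 : ℝ) :=
      (isOpen_Iio.preimage continuous_abs).mem_nhds h0
    have hev : ∀ᶠ t in nhds (0 : ℝ), s t + t • V (s t) = y :=
      Filter.eventually_of_mem hnb fun t ht => hright ht y
    have hs0 : s 0 = y := by
      have := hright h0 y
      simpa [hTdef] using this
    -- continuity of s at 0
    have hsc : Tendsto s (nhds 0) (nhds y) := by
      have hb : ∀ᶠ t in nhds (0 : ℝ), ‖s t - y‖ ≤ CV * |t| := by
        filter_upwards [hev] with t htev
        have : s t - y = -(t • V (s t)) := by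
          rw [← htev]; abel
        rw [this, norm_neg, norm_smul, Real.norm_eq_abs]
        have := hCV (s t)
        nlinarith [abs_nonneg t]
      have h1 : Tendsto (fun t : ℝ => s t - y) (nhds 0) (nhds 0) := by
        refine squeeze_zero_norm' hb ?_
        have : Tendsto (fun t : ℝ => |t|) (nhds 0) (nhds 0) := by
          simpa using continuous_abs.tendsto (0 : ℝ)
        simpa using this.const_mul CV
      have := h1.add_const y
      simpa using this
    have hscont : ContinuousAt s 0 := by rw [ContinuousAt, hs0]; exact hsc
    have hVs : ContinuousAt (fun t => V (s t)) 0 := by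
      refine ContinuousAt.comp ?_ hscont
      rw [hs0]; exact hV.continuous.continuousAt
    -- derivative of s at 0
    have hds : HasDerivAt s (-V y) 0 := by
      have hkey : HasDerivAt (fun t : ℝ => y + t • (-(V (s t)))) (-(V (s 0))) 0 :=
        (hasDerivAt_smul_of_continuousAt hVs.neg).const_add y
      have hcongr : s =ᶠ[nhds (0:ℝ)] fun t : ℝ => y + t • (-(V (s t))) := by
        filter_upwards [hev] with t htev
        rw [smul_neg, ← htev]
        abel
      have := hkey.congr_of_eventuallyEq hcongr
      rwa [hs0] at this
    -- derivative of p ∘ s at 0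
    have hps : HasDerivAt (fun t => p (s t)) (-(fderiv ℝ p y (V y))) 0 := by
      have hfp : HasFDerivAt p (fderiv ℝ p y) (s 0) := by
        rw [hs0]; exact ((hp.differentiable one_ne_zero) y).hasFDerivAt
      have := hfp.comp_hasDerivAt 0 hds
      rw [map_neg] at this
      exact this
    -- matrix-valued path
    set W : ℝ → (Fin n → Fin n → ℝ) := fun t i j => fderiv ℝ V (s t) (Pi.single j 1) i
      with hWdef
    have hWc : ContinuousAt W 0 := by
      have hco : Continuous fun x : Fin n → ℝ =>
          (fun i j => fderiv ℝ V x (Pi.single j 1) i : Fin n → Fin n → ℝ) := by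
        refine continuous_pi fun i => continuous_pi fun j => ?_
        exact (continuous_apply i).comp
          ((ContinuousLinearMap.apply ℝ (Fin n → ℝ) (Pi.single j 1)).continuous.comp
            (hV.continuous_fderiv one_ne_zero))
      exact (hco.continuousAt).comp hscont
    set x₀ : Fin n → Fin n → ℝ := fun i => (1 : Matrix (Fin n) (Fin n) ℝ) i with hx₀def
    set rows : ℝ → (Fin n → Fin n → ℝ) := fun t => x₀ + t • W t with hrowsdef
    have hrows0 : rows 0 = x₀ := by simp [hrowsdef]
    have hrowsd : HasDerivAt rows (W 0) 0 :=
      (hasDerivAt_smul_of_continuousAt hWc).const_add x₀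
    set δ : ℝ → ℝ := fun t => detCM n (rows t) with hδdef
    have hupdate : ∀ (H : Fin n → Fin n → ℝ) (i : Fin n),
        detCM n (Function.update x₀ i (H i)) = H i i := by
      intro H i
      rw [detCM_apply]
      have : Matrix.of (Function.update x₀ i (H i))
          = Matrix.updateRow (1 : Matrix (Fin n) (Fin n) ℝ) i (H i) := by
        ext a b
        by_cases hai : a = i
        · subst hai; simp [Function.update_self]
        · simp [Function.update_of_ne hai, Matrix.updateRow_ne hai, hx₀def]
      rw [this, det_updateRow_one]
    have hδd : HasDerivAt δ (∑ j, fderiv ℝ V y (Pi.single j 1) j) 0 := by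
      have hF : HasFDerivAt (detCM n) ((detCM n).linearDeriv x₀) x₀ :=
        (detCM n).hasFDerivAt x₀
      have hF' : HasFDerivAt (detCM n) ((detCM n).linearDeriv x₀) (rows 0) := by
        rwa [hrows0]
      have hcomp := hF'.comp_hasDerivAt 0 hrowsd
      have hval : (detCM n).linearDeriv x₀ (W 0) = ∑ j, fderiv ℝ V y (Pi.single j 1) j := by
        rw [ContinuousMultilinearMap.linearDeriv_apply]
        refine Finset.sum_congr rfl fun i _ => ?_
        rw [hupdate (W 0) i, hWdef]
        simp only
        rw [hs0]
      rw [← hval]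
      exact hcomp
    -- link δ with the determinant of DT
    have hlink : ∀ t, (DT t (s t)).det = δ t := by
      intro t
      have hmx : LinearMap.toMatrix' ((DT t (s t)) : (Fin n → ℝ) →ₗ[ℝ] (Fin n → ℝ))
          = Matrix.of (rows t) := by
        ext i j
        rw [LinearMap.toMatrix'_apply]
        have hsingle : (fun j' => if j' = j then (1:ℝ) else 0) = Pi.single j 1 := by
          ext j'
          simp [Pi.single_apply]
        have : (DT t (s t)) (Pi.single j 1) = Pi.single j 1 + t • fderiv ℝ V (s t) (Pi.single j 1) :=
          hDTapp t (s t) _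
        simp only [ContinuousLinearMap.coe_coe]
        rw [this]
        simp only [Pi.add_apply, Pi.smul_apply, smul_eq_mul]
        rw [hrowsdef]
        simp only [Matrix.of_apply, Pi.add_apply, Pi.smul_apply, smul_eq_mul, hWdef, hx₀def]
        congr 1
        rw [Matrix.one_apply, Pi.single_apply]
      rw [hδdef]
      simp only
      rw [detCM_apply, ← hmx, LinearMap.det_toMatrix']
    have hδ0 : δ 0 = 1 := by
      rw [hδdef]
      simp only
      rw [hrows0, detCM_apply]
      have : Matrix.of x₀ = (1 : Matrix (Fin n) (Fin n) ℝ) := by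
        ext a b; simp [hx₀def]
      rw [this, Matrix.det_one]
    have hδpos : ∀ᶠ t in nhds (0:ℝ), 0 < δ t := by
      have : Tendsto δ (nhds 0) (nhds 1) := by
        have := hδd.continuousAt
        rwa [ContinuousAt, hδ0] at this
      exact this (Ioi_mem_nhds one_pos)
    have hptEq : (fun t => pt t y) =ᶠ[nhds (0:ℝ)] fun t => p (s t) * (δ t)⁻¹ := by
      filter_upwards [hδpos] with t htpos
      have hst : ∀ u : ℝ, S u y = s u := fun u => by rw [hsdef]
      simp only [hptdef]
      rw [hst t, hlink t, abs_of_pos htpos]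
    have hinv : HasDerivAt (fun t => (δ t)⁻¹)
        (-(∑ j, fderiv ℝ V y (Pi.single j 1) j) / (δ 0) ^ 2) 0 :=
      hδd.inv (by rw [hδ0]; exact one_ne_zero)
    have hmul := hps.mul hinv
    have hfinal := hmul.congr_of_eventuallyEq hptEq
    refine hfinal.congr_deriv ?_
    symm
    rw [hδ0, hs0]
    simp
    ring
end
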